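/- Let n be a natural number, a₀, …, a_n integers, and define f : ℤ → ℤ by f(k) = Σ_{i=0}^n a_i · C(k,i). For an integer m, the following are equivalent: (1) m divides k·f(k) for every integer k (equivalently, m divides gcd{ k·f(k) : k ∈ ℤ }); (2) m divides k·(a_k + a_{k−1}) for every k with 1 ≤ k ≤ n, and m divides (n+1)·a_n. -/
import Mathlib


open Finset

private lemma keyA_choose (k : ℤ) (i : ℕ) : k * Ring.choose k i
    = (i + 1 : ℤ) * Ring.choose k (i + 1) + (i : ℤ) * Ring.choose k i := by
  have h1 : ((i.factorial : ℤ)) * ((k - i) * Ring.choose k i)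
      = (i.factorial : ℤ) * ((i + 1 : ℤ) * Ring.choose k (i + 1)) := by
    have hd := Ring.descPochhammer_eq_factorial_smul_choose k i
    have hd1 := Ring.descPochhammer_eq_factorial_smul_choose k (i + 1)
    have : (descPochhammer ℤ (i+1)).smeval k
        = (descPochhammer ℤ i).smeval k * (k - i) := by
      rw [descPochhammer_succ_right, Polynomial.smeval_mul, Polynomial.smeval_sub,
        Polynomial.smeval_X, Polynomial.smeval_natCast]
      simp
    rw [hd] at this
    rw [hd1, Nat.factorial_succ] at this
    push_cast [nsmul_eq_mul] at this ⊢
    linarith [this]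
  have h2 := mul_left_cancel₀ (by exact_mod_cast i.factorial_ne_zero : (i.factorial:ℤ) ≠ 0) h1
  linarith [h2]

private def bcoef (n : ℕ) (a : ℕ → ℤ) (j : ℕ) : ℤ :=
  (j : ℤ) * ((if j ≤ n then a j else 0) + (if j - 1 ≤ n then a (j-1) else 0))

private lemma keyB_choose (n : ℕ) (a : ℕ → ℤ) (f : ℤ → ℤ)
    (hf : ∀ k : ℤ, f k = ∑ i ∈ Finset.range (n + 1), a i * Ring.choose k i) (k : ℤ) :
    k * f k = ∑ j ∈ Finset.range (n + 2), (bcoef n a j * Ring.choose k j) := by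
  simp only [bcoef]
  set a' : ℕ → ℤ := fun j => if j ≤ n then a j else 0 with ha'
  have step : k * f k = ∑ i ∈ Finset.range (n + 1),
      (a i * ((i+1 : ℤ) * Ring.choose k (i+1)) + a i * ((i : ℤ) * Ring.choose k i)) := by
    rw [hf, Finset.mul_sum]
    refine Finset.sum_congr rfl fun i _ => ?_
    rw [mul_comm k (a i * Ring.choose k i), mul_assoc, mul_comm (Ring.choose k i) k,
      keyA_choose]
    ring
  rw [step, Finset.sum_add_distrib]
  have hB : ∀ j ∈ Finset.range (n+2),
      (j : ℤ) * (a' j + a' (j-1)) * Ring.choose k j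
      = (j : ℤ) * a' j * Ring.choose k j + (j : ℤ) * a' (j-1) * Ring.choose k j := by
    intro j _; ring
  rw [Finset.sum_congr rfl hB, Finset.sum_add_distrib]
  rw [add_comm]
  congr 1
  · rw [Finset.sum_range_succ (fun j => (j:ℤ) * a' j * Ring.choose k j) (n+1)]
    have : a' (n + 1) = 0 := by simp [ha']
    rw [this]
    simp only [mul_zero, zero_mul, add_zero]
    refine Finset.sum_congr rfl fun i hi => ?_
    rw [Finset.mem_range] at hi
    have : a' i = a i := by simp [ha', Nat.lt_succ_iff.mp hi]
    rw [this]; ring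
  · rw [Finset.sum_range_succ' (fun j => (j:ℤ) * a' (j-1) * Ring.choose k j) (n+1)]
    simp only [Nat.cast_zero, zero_mul, add_zero]
    refine Finset.sum_congr rfl fun i hi => ?_
    rw [Finset.mem_range] at hi
    have : a' (i + 1 - 1) = a i := by simp [ha', Nat.lt_succ_iff.mp hi]
    rw [this]
    push_cast
    ring

/-- **Corollary (congruence conditions for dividing all `k·f(k)`).**
If `f(k) = Σ_{i=0}^n a_i · C(k,i)` with integers `a_i`, then an integer `m` divides
`k·f(k)` for every integer `k` if and only if `m` divides `k·(a_k + a_{k−1})` for all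
`1 ≤ k ≤ n` and `m` divides `(n+1)·a_n`. -/
theorem dvd_mul_self_iff_congruences (n : ℕ) (a : ℕ → ℤ) (f : ℤ → ℤ)
    (hf : ∀ k : ℤ, f k = ∑ i ∈ Finset.range (n + 1), a i * Ring.choose k i)
    (m : ℤ) :
    (∀ k : ℤ, m ∣ k * f k) ↔
      ((∀ k ∈ Finset.Icc 1 n, m ∣ (k : ℤ) * (a k + a (k - 1))) ∧
        m ∣ (n + 1 : ℤ) * a n) := by
  have keyB := keyB_choose n a f hf
  have hbn : bcoef n a (n+1) = (n + 1 : ℤ) * a n := by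
    simp [bcoef]
  constructor
  · intro H
    have key : ∀ j, j ≤ n + 1 → m ∣ bcoef n a j := by
      intro j
      induction j using Nat.strong_induction_on with
      | _ j ih =>
        intro hj
        have hv := H (j : ℤ)
        rw [keyB] at hv
        have hsum : ∑ i ∈ Finset.range (n + 2), bcoef n a i * Ring.choose (j : ℤ) i
            = (∑ i ∈ Finset.range j, bcoef n a i * (Nat.choose j i : ℤ)) + bcoef n a j := by
          have h1 : ∀ i ∈ Finset.range (n+2), bcoef n a i * Ring.choose (j : ℤ) i
              = bcoef n a i * (Nat.choose j i : ℤ) := by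
            intro i _
            rw [Ring.choose_natCast]
          rw [Finset.sum_congr rfl h1]
          rw [← Finset.sum_range_add_sum_Ico _ (by omega : j + 1 ≤ n + 2)]
          have h2 : ∑ i ∈ Finset.Ico (j+1) (n+2), bcoef n a i * (Nat.choose j i : ℤ) = 0 := by
            apply Finset.sum_eq_zero
            intro i hi
            rw [Finset.mem_Ico] at hi
            rw [Nat.choose_eq_zero_of_lt (by omega)]
            simp
          rw [h2, add_zero, Finset.sum_range_succ, Nat.choose_self]
          simp
        rw [hsum] at hv
        have hdvd : m ∣ ∑ i ∈ Finset.range j, bcoef n a i * (Nat.choose j i : ℤ) := by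
          apply Finset.dvd_sum
          intro i hi
          rw [Finset.mem_range] at hi
          exact Dvd.dvd.mul_right (ih i hi (by omega)) _
        exact (dvd_add_right hdvd).mp hv
    constructor
    · intro k hk
      rw [Finset.mem_Icc] at hk
      have := key k (by omega)
      have e1 : k - 1 ≤ n := by omega
      simpa [bcoef, hk.2, e1] using this
    · rw [← hbn]; exact key (n+1) le_rfl
  · rintro ⟨h1, h2⟩ k
    rw [keyB]
    apply Finset.dvd_sum
    intro j hj
    rw [Finset.mem_range] at hj
    apply Dvd.dvd.mul_right
    rcases Nat.eq_zero_or_pos j with h0 | hpos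
    · simp [h0, bcoef]
    · rcases Nat.lt_or_ge j (n+1) with hlt | hge
      · have hj' : j ∈ Finset.Icc 1 n := Finset.mem_Icc.mpr ⟨hpos, by omega⟩
        have := h1 j hj'
        have e1 : j ≤ n := by omega
        have e2 : j - 1 ≤ n := by omega
        simpa [bcoef, e1, e2] using this
      · have : j = n + 1 := by omega
        rw [this, hbn]; exact h2
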